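/- Let H be a continuous piecewise linear function from [0,T] to [0,∞) with slopes ±p, starting and ending at 0. For each level t ≥ 0, the occupation density L_T(t) = lim_{ε↓0} (1/ε) ∫₀ᵀ 1_{t ≤ H(r) < t+ε} dr equals (2/p) times the number of up-crossings of level t by H on [0,T], whenever t is not the height of a local extremum of H. -/

import Mathlib

open MeasureTheory Filter

/-- `H` is continuous piecewise linear on `[0, T]`, with slopes `±p` on finitely many
subintervals. -/
def PiecewiseLinearPM (p : ℝ) (H : ℝ → ℝ) (T : ℝ) : Prop :=
  ∃ (n : ℕ) (t : ℕ → ℝ), 0 < n ∧ t 0 = 0 ∧ t n = T ∧ (∀ i < n, t i < t (i + 1)) ∧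
    ∀ i < n,
      (∀ r ∈ Set.Icc (t i) (t (i + 1)), H r = H (t i) + p * (r - t i)) ∨
      (∀ r ∈ Set.Icc (t i) (t (i + 1)), H r = H (t i) - p * (r - t i))

/-- The set of up-crossing times of level `t` by `H` within `[0, T]`: times `r` with
`H r = t`, `H < t` just before `r` and `H > t` just after `r` (within `[0,T]`). -/
def UpCrossings (H : ℝ → ℝ) (T t : ℝ) : Set ℝ :=
  {r : ℝ | r ∈ Set.Icc (0 : ℝ) T ∧ H r = t ∧
    ∃ δ : ℝ, 0 < δ ∧
      (∀ u ∈ Set.Ioo (r - δ) r ∩ Set.Icc (0 : ℝ) T, H u < t) ∧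
      (∀ u ∈ Set.Ioo r (r + δ) ∩ Set.Icc (0 : ℝ) T, t < H u)}

private lemma vol_between (A : Set ℝ) (x y : ℝ) (h1 : Set.Ioo x y ⊆ A) (h2 : A ⊆ Set.Icc x y) :
    volume A = ENNReal.ofReal (y - x) := by
  apply le_antisymm
  · calc volume A ≤ volume (Set.Icc x y) := measure_mono h2
      _ = ENNReal.ofReal (y - x) := Real.volume_Icc
  · calc ENNReal.ofReal (y - x) = volume (Set.Ioo x y) := Real.volume_Ioo.symm
      _ ≤ volume A := measure_mono h1

private lemma aux1 (p c x r : ℝ) (hp : 0 < p) : c ≤ p * (r - x) ↔ x + c / p ≤ r := by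
  rw [mul_comm, ← div_le_iff₀ hp]
  constructor <;> intro h <;> linarith

private lemma aux2 (p c x r : ℝ) (hp : 0 < p) : p * (r - x) < c ↔ r < x + c / p := by
  rw [mul_comm, ← lt_div_iff₀ hp]
  constructor <;> intro h <;> linarith

private lemma aux3 (p c x r : ℝ) (hp : 0 < p) : p * (r - x) ≤ c ↔ r ≤ x + c / p := by
  rw [mul_comm, ← le_div_iff₀ hp]
  constructor <;> intro h <;> linarith

private lemma aux4 (p c x r : ℝ) (hp : 0 < p) : c < p * (r - x) ↔ x + c / p < r := by
  rw [mul_comm, ← div_lt_iff₀ hp]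
  constructor <;> intro h <;> linarith

private lemma locate (τ : ℕ → ℝ) : ∀ m : ℕ, (∀ i < m, τ i < τ (i + 1)) →
    ∀ r, τ 0 ≤ r → r < τ m → ∃ i, i < m ∧ τ i ≤ r ∧ r < τ (i + 1) := by
  intro m
  induction m with
  | zero => intro _ r h1 h2; exact absurd (lt_of_le_of_lt h1 h2) (lt_irrefl _)
  | succ k ih =>
    intro hstrict r h1 h2
    by_cases hk : r < τ k
    · obtain ⟨i, hi, h3⟩ := ih (fun i hi => hstrict i (Nat.lt_succ_of_lt hi)) r h1 hk
      exact ⟨i, Nat.lt_succ_of_lt hi, h3⟩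
    · exact ⟨k, Nat.lt_succ_self k, not_lt.mp hk, h2⟩

private lemma mono_aux (τ : ℕ → ℝ) (n : ℕ) (hstrict : ∀ i < n, τ i < τ (i + 1)) :
    ∀ j, j ≤ n → ∀ i, i ≤ j → τ i ≤ τ j := by
  intro j
  induction j with
  | zero => intro _ i hi; rw [Nat.le_zero.mp hi]
  | succ k ih =>
    intro hk i hi
    rcases Nat.eq_or_lt_of_le hi with h | h
    · rw [h]
    · have hik : i ≤ k := Nat.lt_succ_iff.mp h
      have hkn : k < n := Nat.lt_of_lt_of_le (Nat.lt_succ_self k) hk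
      exact le_trans (ih (le_of_lt hkn) i hik) (le_of_lt (hstrict k hkn))


private lemma piece_incr (p t a ε x y : ℝ) (hp : 0 < p) (hxy : x < y) (hε : 0 < ε)
    (hea : a ≠ t → ε < |a - t|) (heb : a + p * (y - x) ≠ t → ε < |a + p * (y - x) - t|) :
    MeasurableSet {r : ℝ | r ∈ Set.Ico x y ∧ t ≤ a + p * (r - x) ∧ a + p * (r - x) < t + ε} ∧
      volume {r : ℝ | r ∈ Set.Ico x y ∧ t ≤ a + p * (r - x) ∧ a + p * (r - x) < t + ε} =
        if a ≤ t ∧ t < a + p * (y - x) then ENNReal.ofReal (ε / p) else 0 := by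
  have hset : {r : ℝ | r ∈ Set.Ico x y ∧ t ≤ a + p * (r - x) ∧ a + p * (r - x) < t + ε} =
      Set.Ico (max x (x + (t - a) / p)) (min y (x + (t + ε - a) / p)) := by
    rw [← Set.Ico_inter_Ico]
    ext r
    simp only [Set.mem_setOf_eq, Set.mem_inter_iff, Set.mem_Ico]
    constructor
    · rintro ⟨h1, h2, h3⟩
      exact ⟨h1, ⟨(aux1 p (t - a) x r hp).mp (by linarith),
        (aux2 p (t + ε - a) x r hp).mp (by linarith)⟩⟩
    · rintro ⟨h1, h2, h3⟩
      have k1 := (aux1 p (t - a) x r hp).mpr h2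
      have k2 := (aux2 p (t + ε - a) x r hp).mpr h3
      exact ⟨h1, by linarith, by linarith⟩
  rw [hset]
  refine ⟨measurableSet_Ico, ?_⟩
  rw [Real.volume_Ico]
  by_cases hc : a ≤ t ∧ t < a + p * (y - x)
  · rw [if_pos hc]
    have hbne : a + p * (y - x) ≠ t := by linarith [hc.2]
    have hb : ε < a + p * (y - x) - t := by
      have := heb hbne
      rwa [abs_of_pos (by linarith [hc.2])] at this
    have hmax : max x (x + (t - a) / p) = x + (t - a) / p :=
      max_eq_right (le_add_of_nonneg_right (div_nonneg (by linarith [hc.1]) hp.le))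
    have hmin : min y (x + (t + ε - a) / p) = x + (t + ε - a) / p :=
      min_eq_right ((aux1 p (t + ε - a) x y hp).mp (by linarith))
    rw [hmax, hmin]
    congr 1
    field_simp
    ring
  · rw [if_neg hc, ENNReal.ofReal_eq_zero]
    rcases not_and_or.mp hc with h | h
    · push_neg at h
      have ha : ε < a - t := by
        have := hea (ne_of_gt h)
        rwa [abs_of_pos (by linarith)] at this
      have h2 : x + (t + ε - a) / p < x := by
        have : (t + ε - a) / p < 0 := div_neg_of_neg_of_pos (by linarith) hp
        linarith
      calc min y (x + (t + ε - a) / p) - max x (x + (t - a) / p)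
          ≤ (x + (t + ε - a) / p) - x := sub_le_sub (min_le_right _ _) (le_max_left _ _)
        _ ≤ 0 := by linarith
    · push_neg at h
      have h2 : y ≤ x + (t - a) / p := (aux3 p (t - a) x y hp).mp (by linarith)
      calc min y (x + (t + ε - a) / p) - max x (x + (t - a) / p)
          ≤ y - (x + (t - a) / p) := sub_le_sub (min_le_left _ _) (le_max_right _ _)
        _ ≤ 0 := by linarith

private lemma piece_decr (p t a ε x y : ℝ) (hp : 0 < p) (hxy : x < y) (hε : 0 < ε)
    (hea : a ≠ t → ε < |a - t|) (heb : a - p * (y - x) ≠ t → ε < |a - p * (y - x) - t|) :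
    MeasurableSet {r : ℝ | r ∈ Set.Ico x y ∧ t ≤ a - p * (r - x) ∧ a - p * (r - x) < t + ε} ∧
      volume {r : ℝ | r ∈ Set.Ico x y ∧ t ≤ a - p * (r - x) ∧ a - p * (r - x) < t + ε} =
        if a - p * (y - x) ≤ t ∧ t < a then ENNReal.ofReal (ε / p) else 0 := by
  have hset : {r : ℝ | r ∈ Set.Ico x y ∧ t ≤ a - p * (r - x) ∧ a - p * (r - x) < t + ε} =
      Set.Ico x y ∩ Set.Ioc (x + (a - t - ε) / p) (x + (a - t) / p) := by
    ext r
    simp only [Set.mem_setOf_eq, Set.mem_inter_iff, Set.mem_Ico, Set.mem_Ioc]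
    constructor
    · rintro ⟨h1, h2, h3⟩
      exact ⟨h1, ⟨(aux4 p (a - t - ε) x r hp).mp (by linarith),
        (aux3 p (a - t) x r hp).mp (by linarith)⟩⟩
    · rintro ⟨h1, h2, h3⟩
      have k1 := (aux4 p (a - t - ε) x r hp).mpr h2
      have k2 := (aux3 p (a - t) x r hp).mpr h3
      exact ⟨h1, by linarith, by linarith⟩
  have hmeas : MeasurableSet (Set.Ico x y ∩ Set.Ioc (x + (a - t - ε) / p) (x + (a - t) / p)) :=
    measurableSet_Ico.inter measurableSet_Ioc
  have hv : volume (Set.Ico x y ∩ Set.Ioc (x + (a - t - ε) / p) (x + (a - t) / p)) =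
      ENNReal.ofReal (min y (x + (a - t) / p) - max x (x + (a - t - ε) / p)) := by
    apply vol_between
    · rintro r ⟨hr1, hr2⟩
      refine ⟨⟨?_, ?_⟩, ?_, ?_⟩
      · exact le_of_lt (lt_of_le_of_lt (le_max_left _ _) hr1)
      · exact lt_of_lt_of_le hr2 (min_le_left _ _)
      · exact lt_of_le_of_lt (le_max_right _ _) hr1
      · exact le_of_lt (lt_of_lt_of_le hr2 (min_le_right _ _))
    · rintro r ⟨⟨hr1, hr2⟩, hr3, hr4⟩
      exact ⟨max_le hr1 (le_of_lt hr3), le_min (le_of_lt hr2) hr4⟩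
  rw [hset, hv]
  refine ⟨hmeas, ?_⟩
  by_cases hc : a - p * (y - x) ≤ t ∧ t < a
  · rw [if_pos hc]
    have ha : ε < a - t := by
      have := hea hc.2.ne'
      rwa [abs_of_pos (by linarith [hc.2])] at this
    have hmax : max x (x + (a - t - ε) / p) = x + (a - t - ε) / p :=
      max_eq_right (le_add_of_nonneg_right (div_nonneg (by linarith) hp.le))
    have hmin : min y (x + (a - t) / p) = x + (a - t) / p :=
      min_eq_right ((aux1 p (a - t) x y hp).mp (by linarith [hc.1]))
    rw [hmax, hmin]
    congr 1
    field_simp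
    ring
  · rw [if_neg hc, ENNReal.ofReal_eq_zero]
    rcases not_and_or.mp hc with h | h
    · push_neg at h
      have hbne : a - p * (y - x) ≠ t := ne_of_gt h
      have hb : ε < a - p * (y - x) - t := by
        have := heb hbne
        rwa [abs_of_pos (by linarith)] at this
      have h2 : y ≤ x + (a - t - ε) / p := (aux3 p (a - t - ε) x y hp).mp (by linarith)
      calc min y (x + (a - t) / p) - max x (x + (a - t - ε) / p)
          ≤ y - (x + (a - t - ε) / p) := sub_le_sub (min_le_left _ _) (le_max_right _ _)
        _ ≤ 0 := by linarith
    · push_neg at h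
      have h2 : x + (a - t) / p ≤ x := by
        have : (a - t) / p ≤ 0 := div_nonpos_of_nonpos_of_nonneg (by linarith) hp.le
        linarith
      calc min y (x + (a - t) / p) - max x (x + (a - t - ε) / p)
          ≤ (x + (a - t) / p) - x := sub_le_sub (min_le_right _ _) (le_max_left _ _)
        _ ≤ 0 := by linarith

/-- Let `H : [0,T] → [0,∞)` be continuous piecewise linear with slopes `±p`,
with `H 0 = H T = 0`.  For each level `t ≥ 0` which is not the height of a local extremum of
`H`, the occupation density `L_T(t) = lim_{ε↓0} (1/ε) ∫₀ᵀ 1_{t ≤ H(r) < t+ε} dr` equals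
`2/p` times the number of up-crossings of level `t` by `H` on `[0,T]`. -/
theorem occupation_density_eq_upcrossings
    (p : ℝ) (hp : 0 < p) (H : ℝ → ℝ) (T : ℝ) (hT : 0 < T)
    (hH : PiecewiseLinearPM p H T)
    (hHpos : ∀ r ∈ Set.Icc (0 : ℝ) T, 0 ≤ H r)
    (hH0 : H 0 = 0) (hHT : H T = 0)
    (t : ℝ) (ht : 0 ≤ t)
    (hnotextr : ∀ r ∈ Set.Ioo (0 : ℝ) T, IsLocalExtr H r → H r ≠ t)
    (Lt : ℝ)
    (hL : Tendsto
      (fun ε : ℝ => (1 / ε) *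
        (volume {r : ℝ | r ∈ Set.Icc (0 : ℝ) T ∧ H r ∈ Set.Ico t (t + ε)}).toReal)
      (nhdsWithin 0 (Set.Ioi 0)) (nhds Lt)) :
    Lt = (2 / p) * (UpCrossings H T t).ncard := by
  classical
  obtain ⟨n, τ, hn, hτ0, hτn, hstrict, hpieces⟩ := hH
  have hmono : ∀ i j, i ≤ j → j ≤ n → τ i ≤ τ j :=
    fun i j hij hjn => mono_aux τ n hstrict j hjn i hij
  have hτpos : ∀ i, i ≤ n → 0 ≤ τ i := fun i hi => hτ0 ▸ hmono 0 i (Nat.zero_le _) hi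
  have hτleT : ∀ i, i ≤ n → τ i ≤ T := fun i hi => hτn ▸ hmono i n hi (le_refl n)
  set up : ℕ → Prop := fun i => H (τ i) ≤ t ∧ t < H (τ (i + 1)) with hup_def
  set down : ℕ → Prop := fun i => H (τ (i + 1)) ≤ t ∧ t < H (τ i) with hdown_def
  -- up pieces are increasing
  have hincr : ∀ i, i < n → up i →
      ∀ r ∈ Set.Icc (τ i) (τ (i + 1)), H r = H (τ i) + p * (r - τ i) := by
    intro i hi hu
    rcases hpieces i hi with hf | hf
    · exact hf
    · exfalso
      have hb : H (τ (i + 1)) = H (τ i) - p * (τ (i + 1) - τ i) :=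
        hf _ ⟨(hstrict i hi).le, le_refl _⟩
      have hL0 : 0 < p * (τ (i + 1) - τ i) := mul_pos hp (sub_pos.mpr (hstrict i hi))
      rw [hup_def] at hu
      obtain ⟨h1, h2⟩ := hu
      rw [hb] at h2
      linarith
  -- characterization of up-crossings
  have hUC : UpCrossings H T t =
      (fun i => τ i + (t - H (τ i)) / p) '' {i : ℕ | i < n ∧ up i} := by
    apply Set.Subset.antisymm
    · rintro r ⟨⟨hr0, hrT⟩, hHr, δ, hδ, hleft, hright⟩
      have hrT' : r < T := by
        rcases lt_or_eq_of_le hrT with h | h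
        · exact h
        · exfalso
          subst h
          have ht0 : t = 0 := by rw [← hHr, hHT]
          set u := max (r - δ / 2) (r / 2) with hu
          have hu1 : r - δ < u := lt_of_lt_of_le (by linarith) (le_max_left _ _)
          have hu2 : u < r := max_lt (by linarith) (by linarith)
          have hu0 : 0 ≤ u := le_trans (by linarith) (le_max_right _ _)
          have h1 := hleft u ⟨⟨hu1, hu2⟩, hu0, hu2.le⟩
          have h2 := hHpos u ⟨hu0, hu2.le⟩
          rw [ht0] at h1
          linarith
      obtain ⟨i, hi, hri, hri'⟩ := locate τ n hstrict r (hτ0 ▸ hr0) (by rw [hτn]; exact hrT')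
      rcases hpieces i hi with hf | hf
      · have hHr' : H r = H (τ i) + p * (r - τ i) := hf r ⟨hri, hri'.le⟩
        have hb : H (τ (i + 1)) = H (τ i) + p * (τ (i + 1) - τ i) :=
          hf _ ⟨(hstrict i hi).le, le_refl _⟩
        have hpr : t - H (τ i) = p * (r - τ i) := by rw [← hHr, hHr']; ring
        refine ⟨i, ⟨hi, ?_, ?_⟩, ?_⟩
        · have : 0 ≤ p * (r - τ i) := mul_nonneg hp.le (by linarith)
          linarith
        · have hk : p * (r - τ i) < p * (τ (i + 1) - τ i) :=
            mul_lt_mul_of_pos_left (by linarith) hp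
          rw [hb]; linarith
        · show τ i + (t - H (τ i)) / p = r
          rw [hpr, mul_div_cancel_left₀ _ hp.ne']
          ring
      · exfalso
        have hHr' : H r = H (τ i) - p * (r - τ i) := hf r ⟨hri, hri'.le⟩
        set u := min (r + δ / 2) ((r + τ (i + 1)) / 2) with hu
        have hu1 : r < u := lt_min (by linarith) (by linarith)
        have hu2 : u < r + δ := lt_of_le_of_lt (min_le_left _ _) (by linarith)
        have hu3 : u < τ (i + 1) := lt_of_le_of_lt (min_le_right _ _) (by linarith)
        have hu0 : 0 ≤ u := le_trans hr0 hu1.le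
        have huT : u ≤ T := le_trans hu3.le (hτleT (i + 1) hi)
        have hq := hright u ⟨⟨hu1, hu2⟩, hu0, huT⟩
        have hHu : H u = H (τ i) - p * (u - τ i) := hf u ⟨le_trans hri hu1.le, hu3.le⟩
        have hk : p * (r - τ i) < p * (u - τ i) := mul_lt_mul_of_pos_left (by linarith) hp
        rw [hHr'] at hHr
        rw [hHu] at hq
        linarith
    · rintro r ⟨i, ⟨hi, hu⟩, rfl⟩
      show τ i + (t - H (τ i)) / p ∈ UpCrossings H T t
      have hf := hincr i hi hu
      have hxy := hstrict i hi
      have hb : H (τ (i + 1)) = H (τ i) + p * (τ (i + 1) - τ i) := hf _ ⟨hxy.le, le_refl _⟩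
      rw [hup_def] at hu
      obtain ⟨hat, htb⟩ := hu
      set a := H (τ i) with ha
      set r₀ := τ i + (t - a) / p with hr₀
      have hr1 : τ i ≤ r₀ := le_add_of_nonneg_right (div_nonneg (by linarith) hp.le)
      have hr2 : r₀ < τ (i + 1) := by
        have h1 : t - a < p * (τ (i + 1) - τ i) := by rw [hb] at htb; linarith
        have h2 := (aux4 p (t - a) (τ i) (τ (i + 1)) hp).mp h1
        rw [hr₀]
        exact h2
      have hτi0 : 0 ≤ τ i := hτpos i (le_of_lt hi)
      have hτ1T : τ (i + 1) ≤ T := hτleT (i + 1) hi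
      have hr0eq : H r₀ = a + p * (r₀ - τ i) := hf r₀ ⟨hr1, hr2.le⟩
      have hHr₀ : H r₀ = t := by
        rw [hr0eq, hr₀]
        field_simp
        ring
      refine ⟨⟨le_trans hτi0 hr1, le_trans hr2.le hτ1T⟩, hHr₀, ?_⟩
      have hrightgen : ∀ δ', 0 < δ' → δ' ≤ τ (i + 1) - r₀ →
          ∀ u ∈ Set.Ioo r₀ (r₀ + δ') ∩ Set.Icc 0 T, t < H u := by
        rintro δ' hδ' hδ'' u ⟨⟨hu1, hu2⟩, -⟩
        have hu3 : u < τ (i + 1) := by linarith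
        have hHu : H u = a + p * (u - τ i) := hf u ⟨le_trans hr1 hu1.le, hu3.le⟩
        have hk : p * (r₀ - τ i) < p * (u - τ i) := mul_lt_mul_of_pos_left (by linarith) hp
        rw [hHu]; rw [hr0eq] at hHr₀; linarith
      by_cases hcase : τ i < r₀
      · refine ⟨min (r₀ - τ i) (τ (i + 1) - r₀),
          lt_min (by linarith) (by linarith), ?_, ?_⟩
        · rintro u ⟨⟨hu1, hu2⟩, -⟩
          have hm := min_le_left (r₀ - τ i) (τ (i + 1) - r₀)
          have hu3 : τ i < u := by linarith
          have hHu : H u = a + p * (u - τ i) := hf u ⟨hu3.le, by linarith [hr2]⟩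
          have hk : p * (u - τ i) < p * (r₀ - τ i) := mul_lt_mul_of_pos_left (by linarith) hp
          rw [hHu]; rw [hr0eq] at hHr₀; linarith
        · exact hrightgen _ (lt_min (by linarith) (by linarith)) (min_le_right _ _)
      · have hre : r₀ = τ i := le_antisymm (not_lt.mp hcase) hr1
        have hta : t = a := by
          have h' : (t - a) / p = 0 := by
            have := hre
            rw [hr₀] at this
            linarith
          rcases div_eq_zero_iff.mp h' with h'' | h''
          · linarith
          · exact absurd h'' hp.ne'
        rcases Nat.eq_zero_or_pos i with hi0 | hipos
        · subst hi0
          refine ⟨τ 1 - r₀, by linarith [hr2], ?_,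
            hrightgen _ (by linarith [hr2]) (le_refl _)⟩
          rintro u ⟨⟨hu1, hu2⟩, hu3, -⟩
          exfalso
          rw [hre, hτ0] at hu2
          linarith
        · obtain ⟨k, rfl⟩ : ∃ k, i = k + 1 := ⟨i - 1, (Nat.succ_pred_eq_of_pos hipos).symm⟩
          have hkn : k < n := Nat.lt_of_succ_lt hi
          have hτk : τ k < τ (k + 1) := hstrict k hkn
          rcases hpieces k hkn with hg | hg
          · have hbk : H (τ (k + 1)) = H (τ k) + p * (τ (k + 1) - τ k) :=
              hg _ ⟨hτk.le, le_refl _⟩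
            refine ⟨min (τ (k + 1) - τ k) (τ (k + 1 + 1) - r₀),
              lt_min (by linarith) (by linarith [hr2]), ?_,
              hrightgen _ (lt_min (by linarith) (by linarith [hr2])) (min_le_right _ _)⟩
            rintro u ⟨⟨hu1, hu2⟩, -⟩
            have hm := min_le_left (τ (k + 1) - τ k) (τ (k + 1 + 1) - r₀)
            have hu3 : τ k < u := by rw [hre] at hu1 hm; linarith
            have hu4 : u < τ (k + 1) := by rw [hre] at hu2; exact hu2
            have hHu : H u = H (τ k) + p * (u - τ k) := hg u ⟨hu3.le, hu4.le⟩
            have hk2 : p * (u - τ k) < p * (τ (k + 1) - τ k) :=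
              mul_lt_mul_of_pos_left (by linarith) hp
            rw [hHu]
            rw [ha] at hta
            linarith [hbk]
          · exfalso
            have hbk : H (τ (k + 1)) = H (τ k) - p * (τ (k + 1) - τ k) :=
              hg _ ⟨hτk.le, le_refl _⟩
            have hlocmin : IsLocalMin H (τ (k + 1)) := by
              have hmem : Set.Ioo (τ k) (τ (k + 1 + 1)) ∈ nhds (τ (k + 1)) :=
                Ioo_mem_nhds hτk (hstrict (k + 1) hi)
              apply Filter.eventually_of_mem hmem
              intro u hu
              rcases le_or_gt u (τ (k + 1)) with h | h
              · have hHu : H u = H (τ k) - p * (u - τ k) := hg u ⟨hu.1.le, h⟩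
                have : p * (u - τ k) ≤ p * (τ (k + 1) - τ k) :=
                  mul_le_mul_of_nonneg_left (by linarith) hp.le
                rw [hHu, hbk]; linarith
              · have hHu : H u = H (τ (k + 1)) + p * (u - τ (k + 1)) := hf u ⟨h.le, hu.2.le⟩
                have : 0 ≤ p * (u - τ (k + 1)) := mul_nonneg hp.le (by linarith)
                rw [hHu]; linarith
            have h0 : 0 < τ (k + 1) := lt_of_le_of_lt (hτpos k (le_of_lt hkn)) hτk
            have hTT : τ (k + 1) < T :=
              lt_of_lt_of_le (hstrict (k + 1) hi) (hτleT (k + 1 + 1) hi)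
            exact hnotextr (τ (k + 1)) ⟨h0, hTT⟩ (Or.inl hlocmin) hta.symm
  -- injectivity
  have hinj : Set.InjOn (fun i => τ i + (t - H (τ i)) / p) {i : ℕ | i < n ∧ up i} := by
    have hmem : ∀ i, i ∈ {i : ℕ | i < n ∧ up i} →
        τ i ≤ τ i + (t - H (τ i)) / p ∧ τ i + (t - H (τ i)) / p < τ (i + 1) := by
      rintro i ⟨hi, hu⟩
      have hb : H (τ (i + 1)) = H (τ i) + p * (τ (i + 1) - τ i) :=
        hincr i hi hu _ ⟨(hstrict i hi).le, le_refl _⟩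
      rw [hup_def] at hu
      constructor
      · exact le_add_of_nonneg_right (div_nonneg (by linarith [hu.1]) hp.le)
      · have h1 : t - H (τ i) < p * (τ (i + 1) - τ i) := by
          have := hu.2; rw [hb] at this; linarith
        have := (aux4 p (t - H (τ i)) (τ i) (τ (i + 1)) hp).mp h1
        linarith
    intro i hi j hj hij
    have hij' : τ i + (t - H (τ i)) / p = τ j + (t - H (τ j)) / p := hij
    rcases lt_trichotomy i j with h | h | h
    · exfalso
      have h3 : τ (i + 1) ≤ τ j := hmono (i + 1) j h (le_of_lt hj.1)
      linarith [(hmem i hi).2, (hmem j hj).1]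
    · exact h
    · exfalso
      have h3 : τ (j + 1) ≤ τ i := hmono (j + 1) i h (le_of_lt hi.1)
      linarith [(hmem j hj).2, (hmem i hi).1]
  have hncard : (UpCrossings H T t).ncard = ((Finset.range n).filter up).card := by
    have hsetfin : {i : ℕ | i < n ∧ up i} = ↑((Finset.range n).filter up) := by
      ext i
      simp [Finset.mem_filter, Finset.mem_range]
    rw [hUC, Set.ncard_image_of_injOn hinj, hsetfin, Set.ncard_coe_finset]
  -- counting: #up = #down
  have hUD : ((Finset.range n).filter up).card = ((Finset.range n).filter down).card := by
    have htel : ∑ i ∈ Finset.range n,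
        ((if t < H (τ (i + 1)) then (1 : ℤ) else 0) - (if t < H (τ i) then (1 : ℤ) else 0))
        = 0 := by
      rw [Finset.sum_range_sub (fun i => if t < H (τ i) then (1 : ℤ) else 0)]
      have h0 : ¬ t < H (τ 0) := by rw [hτ0, hH0]; exact not_lt.mpr ht
      have h1 : ¬ t < H (τ n) := by rw [hτn, hHT]; exact not_lt.mpr ht
      simp [h0, h1]
    have hterm : ∀ i ∈ Finset.range n,
        ((if t < H (τ (i + 1)) then (1 : ℤ) else 0) - (if t < H (τ i) then (1 : ℤ) else 0))
        = ((if up i then (1 : ℤ) else 0) - (if down i then (1 : ℤ) else 0)) := by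
      intro i _
      rcases le_or_gt (H (τ i)) t with h1 | h1 <;> rcases le_or_gt (H (τ (i + 1))) t with h2 | h2
      · simp [hup_def, hdown_def, not_lt.mpr h1, not_lt.mpr h2, h1, h2]
      · simp [hup_def, hdown_def, not_lt.mpr h1, h1, h2]
      · simp [hup_def, hdown_def, not_lt.mpr h2, h1, h2]
      · simp [hup_def, hdown_def, h1, h2, not_le.mpr h1, not_le.mpr h2]
    rw [Finset.sum_congr rfl hterm, Finset.sum_sub_distrib, Finset.sum_boole,
      Finset.sum_boole] at htel
    have := sub_eq_zero.mp htel
    exact_mod_cast this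
  -- C = #(up or down) = 2 * #up
  have hCcard : ((Finset.range n).filter (fun i => up i ∨ down i)).card =
      2 * ((Finset.range n).filter up).card := by
    rw [Finset.filter_or]
    rw [Finset.card_union_of_disjoint]
    · rw [← hUD]; ring
    · rw [Finset.disjoint_left]
      intro i hiu hid
      rw [Finset.mem_filter, hup_def] at hiu
      rw [Finset.mem_filter, hdown_def] at hid
      linarith [hiu.2.1, hiu.2.2, hid.2.1, hid.2.2]
  set C := ((Finset.range n).filter (fun i => up i ∨ down i)).card with hC_def
  set U := ((Finset.range n).filter up).card with hU_def
  -- ε₀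
  set ε₀ := (Finset.range (n + 1)).inf' ⟨0, by simp⟩
      (fun j => if H (τ j) = t then 1 else |H (τ j) - t|) with hε₀_def
  have hε₀pos : 0 < ε₀ := by
    rw [hε₀_def]
    apply Finset.lt_inf'_iff _ |>.mpr
    intro j _
    by_cases h : H (τ j) = t
    · simp [h]
    · simp [h, abs_pos.mpr (sub_ne_zero.mpr h)]
  have hε₀le : ∀ j, j ≤ n → H (τ j) ≠ t → ∀ ε : ℝ, ε < ε₀ → ε < |H (τ j) - t| := by
    intro j hj hne ε hε
    have hji : j ∈ Finset.range (n + 1) := Finset.mem_range.mpr (Nat.lt_succ_of_le hj)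
    have := Finset.inf'_le (fun j => if H (τ j) = t then 1 else |H (τ j) - t|) hji
    rw [if_neg hne] at this
    calc ε < ε₀ := hε
      _ ≤ |H (τ j) - t| := this
  -- volume computation
  have hvol : ∀ ε : ℝ, 0 < ε → ε < ε₀ →
      (volume {r : ℝ | r ∈ Set.Icc (0 : ℝ) T ∧ H r ∈ Set.Ico t (t + ε)}).toReal
        = C * (ε / p) := by
    intro ε hε hεε
    set S := {r : ℝ | r ∈ Set.Icc (0 : ℝ) T ∧ H r ∈ Set.Ico t (t + ε)} with hS_def
    have hkey : ∀ i, i < n → MeasurableSet (S ∩ Set.Ico (τ i) (τ (i + 1))) ∧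
        volume (S ∩ Set.Ico (τ i) (τ (i + 1))) =
          if up i ∨ down i then ENNReal.ofReal (ε / p) else 0 := by
      intro i hi
      have hxy : τ i < τ (i + 1) := hstrict i hi
      have h0i : 0 ≤ τ i := hτpos i (le_of_lt hi)
      have hiT : τ (i + 1) ≤ T := hτleT (i + 1) hi
      have hseteq : S ∩ Set.Ico (τ i) (τ (i + 1)) =
          {r : ℝ | r ∈ Set.Ico (τ i) (τ (i + 1)) ∧ t ≤ H r ∧ H r < t + ε} := by
        ext r
        simp only [hS_def, Set.mem_inter_iff, Set.mem_setOf_eq, Set.mem_Icc, Set.mem_Ico]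
        constructor
        · rintro ⟨⟨_, h2⟩, h3⟩; exact ⟨h3, h2⟩
        · rintro ⟨h1, h2⟩
          exact ⟨⟨⟨le_trans h0i h1.1, le_trans (le_of_lt h1.2) hiT⟩, h2⟩, h1⟩
      have hea : H (τ i) ≠ t → ε < |H (τ i) - t| :=
        fun h => hε₀le i (le_of_lt hi) h ε hεε
      rcases hpieces i hi with hf | hf
      · have hb : H (τ (i + 1)) = H (τ i) + p * (τ (i + 1) - τ i) :=
          hf _ ⟨hxy.le, le_refl _⟩
        have heq2 : {r : ℝ | r ∈ Set.Ico (τ i) (τ (i + 1)) ∧ t ≤ H r ∧ H r < t + ε} =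
            {r : ℝ | r ∈ Set.Ico (τ i) (τ (i + 1)) ∧ t ≤ H (τ i) + p * (r - τ i) ∧
              H (τ i) + p * (r - τ i) < t + ε} := by
          ext r
          simp only [Set.mem_setOf_eq]
          constructor
          · rintro ⟨h1, h2⟩
            rw [hf r ⟨h1.1, h1.2.le⟩] at h2
            exact ⟨h1, h2⟩
          · rintro ⟨h1, h2⟩
            rw [hf r ⟨h1.1, h1.2.le⟩]
            exact ⟨h1, h2⟩
        have heb : H (τ i) + p * (τ (i + 1) - τ i) ≠ t →
            ε < |H (τ i) + p * (τ (i + 1) - τ i) - t| := by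
          intro h
          rw [← hb]
          rw [← hb] at h
          exact hε₀le (i + 1) hi h ε hεε
        have hpl := piece_incr p t (H (τ i)) ε (τ i) (τ (i + 1)) hp hxy hε hea heb
        have hcond : (up i ∨ down i) ↔
            (H (τ i) ≤ t ∧ t < H (τ i) + p * (τ (i + 1) - τ i)) := by
          rw [← hb, hup_def, hdown_def]
          constructor
          · rintro (h | h)
            · exact h
            · exfalso
              have hL0 : 0 < p * (τ (i + 1) - τ i) := mul_pos hp (sub_pos.mpr hxy)
              rw [hb] at h
              obtain ⟨ha1, ha2⟩ := h
              linarith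
          · exact Or.inl
        rw [hseteq, heq2]
        refine ⟨hpl.1, ?_⟩
        rw [hpl.2]
        exact if_congr hcond.symm rfl rfl
      · have hb : H (τ (i + 1)) = H (τ i) - p * (τ (i + 1) - τ i) :=
          hf _ ⟨hxy.le, le_refl _⟩
        have heq2 : {r : ℝ | r ∈ Set.Ico (τ i) (τ (i + 1)) ∧ t ≤ H r ∧ H r < t + ε} =
            {r : ℝ | r ∈ Set.Ico (τ i) (τ (i + 1)) ∧ t ≤ H (τ i) - p * (r - τ i) ∧
              H (τ i) - p * (r - τ i) < t + ε} := by
          ext r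
          simp only [Set.mem_setOf_eq]
          constructor
          · rintro ⟨h1, h2⟩
            rw [hf r ⟨h1.1, h1.2.le⟩] at h2
            exact ⟨h1, h2⟩
          · rintro ⟨h1, h2⟩
            rw [hf r ⟨h1.1, h1.2.le⟩]
            exact ⟨h1, h2⟩
        have heb : H (τ i) - p * (τ (i + 1) - τ i) ≠ t →
            ε < |H (τ i) - p * (τ (i + 1) - τ i) - t| := by
          intro h
          rw [← hb]
          rw [← hb] at h
          exact hε₀le (i + 1) hi h ε hεε
        have hpl := piece_decr p t (H (τ i)) ε (τ i) (τ (i + 1)) hp hxy hε hea heb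
        have hcond : (up i ∨ down i) ↔
            (H (τ i) - p * (τ (i + 1) - τ i) ≤ t ∧ t < H (τ i)) := by
          rw [← hb, hup_def, hdown_def]
          constructor
          · rintro (h | h)
            · exfalso
              have hL0 : 0 < p * (τ (i + 1) - τ i) := mul_pos hp (sub_pos.mpr hxy)
              rw [hb] at h
              obtain ⟨ha1, ha2⟩ := h
              linarith
            · exact h
          · exact Or.inr
        rw [hseteq, heq2]
        refine ⟨hpl.1, ?_⟩
        rw [hpl.2]
        exact if_congr hcond.symm rfl rfl
    have hdecomp : S \ {T} = ⋃ i ∈ Finset.range n, (S ∩ Set.Ico (τ i) (τ (i + 1))) := by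
      ext r
      simp only [Set.mem_diff, Set.mem_singleton_iff, Set.mem_iUnion, Finset.mem_range,
        Set.mem_inter_iff, exists_prop]
      constructor
      · rintro ⟨hrS, hrT⟩
        have h1 : τ 0 ≤ r := by rw [hτ0]; exact hrS.1.1
        have h2 : r < τ n := by rw [hτn]; exact lt_of_le_of_ne hrS.1.2 hrT
        obtain ⟨i, hi, h3, h4⟩ := locate τ n hstrict r h1 h2
        exact ⟨i, hi, hrS, h3, h4⟩
      · rintro ⟨i, hi, hrS, h3, h4⟩
        exact ⟨hrS, ne_of_lt (lt_of_lt_of_le h4 (hτleT (i + 1) hi))⟩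
    have hdisj : (↑(Finset.range n) : Set ℕ).PairwiseDisjoint
        (fun i => S ∩ Set.Ico (τ i) (τ (i + 1))) := by
      intro i hi j hj hij
      simp only [Finset.coe_range, Set.mem_Iio] at hi hj
      apply Set.disjoint_left.mpr
      rintro r ⟨-, hri⟩ ⟨-, hrj⟩
      rcases lt_or_gt_of_ne hij with h | h
      · have : τ (i + 1) ≤ τ j := hmono (i + 1) j h (le_of_lt hj)
        exact absurd (lt_of_lt_of_le hri.2 (le_trans this hrj.1)) (lt_irrefl r)
      · have : τ (j + 1) ≤ τ i := hmono (j + 1) i h (le_of_lt hi)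
        exact absurd (lt_of_lt_of_le hrj.2 (le_trans this hri.1)) (lt_irrefl r)
    have hvolS : volume S = volume (S \ {T}) :=
      (measure_diff_null (measure_singleton T)).symm
    rw [hvolS, hdecomp,
      measure_biUnion_finset hdisj (fun i hi => (hkey i (Finset.mem_range.mp hi)).1)]
    have hsum : ∑ i ∈ Finset.range n, volume (S ∩ Set.Ico (τ i) (τ (i + 1))) =
        ∑ i ∈ Finset.range n, if up i ∨ down i then ENNReal.ofReal (ε / p) else 0 :=
      Finset.sum_congr rfl (fun i hi => (hkey i (Finset.mem_range.mp hi)).2)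
    rw [hsum, ← Finset.sum_filter, Finset.sum_const, ← hC_def, nsmul_eq_mul,
      ENNReal.toReal_mul, ENNReal.toReal_natCast,
      ENNReal.toReal_ofReal (div_nonneg hε.le hp.le)]
  -- the limit
  have htend : Tendsto
      (fun ε : ℝ => (1 / ε) *
        (volume {r : ℝ | r ∈ Set.Icc (0 : ℝ) T ∧ H r ∈ Set.Ico t (t + ε)}).toReal)
      (nhdsWithin 0 (Set.Ioi 0)) (nhds ((C : ℝ) / p)) := by
    have heven : ∀ᶠ ε in nhdsWithin (0 : ℝ) (Set.Ioi 0),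
        (C : ℝ) / p = (1 / ε) *
          (volume {r : ℝ | r ∈ Set.Icc (0 : ℝ) T ∧ H r ∈ Set.Ico t (t + ε)}).toReal := by
      filter_upwards [Ioo_mem_nhdsGT_of_mem
        (Set.left_mem_Ico.mpr hε₀pos : (0 : ℝ) ∈ Set.Ico 0 ε₀)] with ε hε
      rw [hvol ε hε.1 hε.2]
      have hε0 : ε ≠ 0 := ne_of_gt hε.1
      have hp0 : p ≠ 0 := hp.ne'
      field_simp
    exact Tendsto.congr' heven tendsto_const_nhds
  have hfinal : Lt = (C : ℝ) / p := tendsto_nhds_unique hL htend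
  rw [hfinal, hncard, hCcard]
  push_cast
  ring
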